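/- Let n ≥ 1, B ≥ 1, α ∈ (0,1), ε > 0, δ ∈ [0,1), ξ = ε + log(1/(1−δ)) and Δ > 0. Let X be a set and let T_0, T_1, …, T_B : X^n → ℝ be functions such that |T_i(x) − T_i(x̃)| ≤ Δ for every i ∈ {0,1,…,B} and all x, x̃ ∈ X^n with d_ham(x, x̃) ≤ 1. Define the randomized algorithm A that, on input x ∈ X^n, draws ζ_0, ζ_1, …, ζ_B i.i.d. from the standard Laplace distribution, sets M_i = T_i(x) + (2Δ/ξ) ζ_i for i = 0,1,…,B, and outputs A(x) = 1{ (B+1)^{-1}(Σ_{i=1}^B 1{M_0 ≤ M_i} + 1) ≤ α } ∈ {0,1}. Then A is (ε,δ)-differentially private: for all x, x̃ ∈ X^n with d_ham(x, x̃) ≤ 1 and every S ⊆ {0,1}, P(A(x) ∈ S) ≤ e^ε P(A(x̃) ∈ S) + δ. -/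

import Mathlib

open MeasureTheory

noncomputable section

/-- Standard Laplace distribution on ℝ. -/
def stdLaplace : Measure ℝ :=
  volume.withDensity (fun x => ENNReal.ofReal ((1 / 2) * Real.exp (-|x|)))

namespace DPAux

open Real ENNReal

lemma stdLaplace_density_meas :
    Measurable fun x : ℝ => ENNReal.ofReal ((1 / 2) * Real.exp (-|x|)) := by
  have : Measurable fun x : ℝ => (1 / 2) * Real.exp (-|x|) :=
    ((measurable_id.abs.neg).exp).const_mul _
  exact this.ennreal_ofReal

lemma integrable_exp_neg_abs : Integrable fun x : ℝ => Real.exp (-|x|) := by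
  have h1 : IntegrableOn (fun x : ℝ => Real.exp (-|x|)) (Set.Iic 0) := by
    refine (integrableOn_exp_Iic 0).congr_fun (fun x hx => ?_) measurableSet_Iic
    simp [abs_of_nonpos (Set.mem_Iic.mp hx)]
  have h2 : IntegrableOn (fun x : ℝ => Real.exp (-|x|)) (Set.Ioi 0) := by
    refine (exp_neg_integrableOn_Ioi 0 one_pos).congr_fun (fun x hx => ?_) measurableSet_Ioi
    simp [abs_of_pos (Set.mem_Ioi.mp hx)]
  have := h1.union h2
  rw [Set.Iic_union_Ioi] at this
  rwa [← integrableOn_univ]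

instance : IsProbabilityMeasure stdLaplace := by
  constructor
  rw [stdLaplace, withDensity_apply _ MeasurableSet.univ, Measure.restrict_univ,
    ← ofReal_integral_eq_lintegral_ofReal (integrable_exp_neg_abs.const_mul _)
      (Filter.Eventually.of_forall fun x => by positivity)]
  have : (∫ x : ℝ, (1 / 2) * Real.exp (-|x|)) = 1 := by
    rw [integral_const_mul, integral_comp_abs (f := fun x => Real.exp (-x)),
      integral_exp_neg_Ioi_zero]
    norm_num
  rw [this, ENNReal.ofReal_one]

lemma stdLaplace_lintegral_shift (s : ℝ) {f : ℝ → ℝ≥0∞} (hf : Measurable f) :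
    ∫⁻ x, f (x + s) ∂stdLaplace ≤ ENNReal.ofReal (Real.exp |s|) * ∫⁻ x, f x ∂stdLaplace := by
  have hd := stdLaplace_density_meas
  have hds : Measurable fun x : ℝ => ENNReal.ofReal ((1 / 2) * Real.exp (-|x - s|)) :=
    (((measurable_id.sub_const s).abs.neg).exp.const_mul _).ennreal_ofReal
  rw [stdLaplace, lintegral_withDensity_eq_lintegral_mul _ hd
        (show Measurable fun x : ℝ => f (x + s) from hf.comp (measurable_add_const s)),
      lintegral_withDensity_eq_lintegral_mul _ hd hf]
  simp only [Pi.mul_apply]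
  have key : (∫⁻ x, ENNReal.ofReal ((1 / 2) * Real.exp (-|x|)) * f (x + s) ∂volume)
      = ∫⁻ x, ENNReal.ofReal ((1 / 2) * Real.exp (-|x - s|)) * f x ∂volume := by
    have h := (measurePreserving_add_right (volume : Measure ℝ) s).lintegral_comp
      (f := fun x => ENNReal.ofReal ((1 / 2) * Real.exp (-|x - s|)) * f x) (hds.mul hf)
    simp only [add_sub_cancel_right] at h
    simpa using h
  rw [key]
  calc ∫⁻ x, ENNReal.ofReal ((1 / 2) * Real.exp (-|x - s|)) * f x ∂volume
      ≤ ∫⁻ x, ENNReal.ofReal (Real.exp |s|) *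
          (ENNReal.ofReal ((1 / 2) * Real.exp (-|x|)) * f x) ∂volume := by
        refine lintegral_mono fun x => ?_
        rw [← mul_assoc, ← ENNReal.ofReal_mul (Real.exp_nonneg _)]
        refine mul_le_mul_left (ENNReal.ofReal_le_ofReal ?_) _
        rw [mul_comm (Real.exp |s|), mul_assoc, ← Real.exp_add]
        have : -|x - s| ≤ -|x| + |s| := by
          have h2 : |x| - |x - s| ≤ |s| := by
            simpa using abs_sub_abs_le_abs_sub x (x - s)
          linarith
        have := Real.exp_le_exp.mpr this
        nlinarith [Real.exp_pos (-|x - s|), Real.exp_pos (-|x| + |s|)]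
    _ = ENNReal.ofReal (Real.exp |s|) *
          ∫⁻ x, ENNReal.ofReal ((1 / 2) * Real.exp (-|x|)) * f x ∂volume := by
        rw [lintegral_const_mul _ (show Measurable fun x : ℝ =>
          ENNReal.ofReal ((1 / 2) * Real.exp (-|x|)) * f x from hd.mul hf)]

lemma pi_shift {m : ℕ} (s : ℝ) {A : Set (Fin (m + 1) → ℝ)} (hA : MeasurableSet A) :
    (Measure.pi fun _ : Fin (m + 1) => stdLaplace)
        {ζ | Function.update ζ 0 (ζ 0 + s) ∈ A}
      ≤ ENNReal.ofReal (Real.exp |s|) *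
        (Measure.pi fun _ : Fin (m + 1) => stdLaplace) A := by
  set μ := Measure.pi fun _ : Fin (m + 1) => stdLaplace with hμ
  set pp := Measure.pi fun _ : Fin m => stdLaplace with hpp
  set e := MeasurableEquiv.piFinSuccAbove (fun _ : Fin (m + 1) => ℝ) 0 with he
  have hmp : MeasurePreserving e μ (stdLaplace.prod pp) :=
    measurePreserving_piFinSuccAbove (fun _ : Fin (m + 1) => stdLaplace) 0
  set A' : Set (ℝ × (Fin m → ℝ)) := e.symm ⁻¹' A with hA'
  have hA'm : MeasurableSet A' := e.symm.measurable hA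
  have hkey : ∀ ζ : Fin (m + 1) → ℝ,
      e (Function.update ζ 0 (ζ 0 + s)) = ((e ζ).1 + s, (e ζ).2) := by
    intro ζ
    simp only [he, MeasurableEquiv.piFinSuccAbove_apply]
    refine Prod.ext ?_ ?_
    · simp
    · funext j
      simp [Fin.removeNth, Fin.succAbove, Function.update]
  have hset : {ζ | Function.update ζ 0 (ζ 0 + s) ∈ A}
      = e ⁻¹' ((fun p : ℝ × (Fin m → ℝ) => (p.1 + s, p.2)) ⁻¹' A') := by
    ext ζ
    simp only [Set.mem_setOf_eq, Set.mem_preimage, hA']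
    rw [← hkey ζ, MeasurableEquiv.symm_apply_apply]
  have hBm : MeasurableSet ((fun p : ℝ × (Fin m → ℝ) => (p.1 + s, p.2)) ⁻¹' A') :=
    ((measurable_fst.add_const s).prodMk measurable_snd) hA'm
  have hApre : μ A = (stdLaplace.prod pp) A' := by
    have hAe : A = e ⁻¹' A' := by ext ζ; simp [hA']
    rw [hAe, hmp.measure_preimage hA'm.nullMeasurableSet]
  rw [hset, hmp.measure_preimage hBm.nullMeasurableSet, hApre,
    Measure.prod_apply hBm, Measure.prod_apply hA'm]
  have hsl : ∀ a : ℝ, (Prod.mk a ⁻¹' ((fun p : ℝ × (Fin m → ℝ) => (p.1 + s, p.2)) ⁻¹' A'))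
      = Prod.mk (a + s) ⁻¹' A' := fun a => rfl
  simp_rw [hsl]
  exact stdLaplace_lintegral_shift s (measurable_measure_prodMk_left hA'm)

lemma dp_arith {ε δ : ℝ} (hε : 0 < ε) (hδ0 : 0 ≤ δ) (hδ1 : δ < 1)
    {P P' : ℝ≥0∞} (hP : P ≤ 1) (hP' : P' ≤ 1)
    (key : P ≤ ENNReal.ofReal (Real.exp (ε + Real.log (1 / (1 - δ)))) * P') :
    P ≤ ENNReal.ofReal (Real.exp ε) * P' + ENNReal.ofReal δ := by
  have h1δ : (0:ℝ) < 1 - δ := by linarith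
  have hexp : Real.exp (ε + Real.log (1 / (1 - δ))) = Real.exp ε / (1 - δ) := by
    rw [Real.exp_add, Real.exp_log (by positivity), one_div, div_eq_mul_inv]
  have hPt : P ≠ ⊤ := (lt_of_le_of_lt hP ENNReal.one_lt_top).ne
  have hPt' : P' ≠ ⊤ := (lt_of_le_of_lt hP' ENNReal.one_lt_top).ne
  set p := P.toReal with hp
  set p' := P'.toReal with hp'
  have hple : p ≤ Real.exp ε / (1 - δ) * p' := by
    have h := ENNReal.toReal_mono (by
      exact ENNReal.mul_ne_top ENNReal.ofReal_ne_top hPt') key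
    rwa [ENNReal.toReal_mul, ENNReal.toReal_ofReal (by positivity), hexp] at h
  have hp1 : p ≤ 1 := by
    have := ENNReal.toReal_mono ENNReal.one_ne_top hP
    simpa using this
  have hp'0 : 0 ≤ p' := ENNReal.toReal_nonneg
  have h2 : p * (1 - δ) ≤ Real.exp ε * p' := by
    have := mul_le_mul_of_nonneg_right hple h1δ.le
    have heq : Real.exp ε / (1 - δ) * p' * (1 - δ) = Real.exp ε * p' := by
      field_simp
    linarith [heq ▸ this]
  have hreal : p ≤ Real.exp ε * p' + δ := by
    nlinarith [mul_nonneg hδ0 (by linarith : (0:ℝ) ≤ 1 - p)]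
  calc P = ENNReal.ofReal p := (ENNReal.ofReal_toReal hPt).symm
    _ ≤ ENNReal.ofReal (Real.exp ε * p' + δ) := ENNReal.ofReal_le_ofReal hreal
    _ = ENNReal.ofReal (Real.exp ε * p') + ENNReal.ofReal δ := by
        rw [ENNReal.ofReal_add (by positivity) hδ0]
    _ = ENNReal.ofReal (Real.exp ε) * ENNReal.ofReal p' + ENNReal.ofReal δ := by
        rw [ENNReal.ofReal_mul (Real.exp_nonneg _)]
    _ = ENNReal.ofReal (Real.exp ε) * P' + ENNReal.ofReal δ := by
        rw [hp', ENNReal.ofReal_toReal hPt']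

end DPAux

/-- Output of the differentially private resampling test on input `x`, given
the Laplace noises `ζ`: it returns `true` iff the noised resampling p-value is
at most `α`, where `M i = T i x + (2Δ/ξ) ζ i`. -/
def dpResamplingOutput {XT : Type*} {n B : ℕ}
    (T : Fin (B + 1) → (Fin n → XT) → ℝ) (α Δ ξ : ℝ)
    (x : Fin n → XT) (ζ : Fin (B + 1) → ℝ) : Bool :=
  if ((∑ i : Fin B,
        if T 0 x + 2 * Δ / ξ * ζ 0 ≤ T i.succ x + 2 * Δ / ξ * ζ i.succ
        then (1 : ℝ) else 0) + 1) / ((B : ℝ) + 1) ≤ α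
  then true else false

/-- the differentially private resampling test is
`(ε,δ)`-differentially private. -/
theorem dp_resampling_test_is_DP
    {XT : Type*} (n B : ℕ) (hn : 1 ≤ n) (hB : 1 ≤ B)
    (α ε δ Δ : ℝ) (hα0 : 0 < α) (hα1 : α < 1) (hε : 0 < ε)
    (hδ0 : 0 ≤ δ) (hδ1 : δ < 1) (hΔ : 0 < Δ)
    (T : Fin (B + 1) → (Fin n → XT) → ℝ)
    (hsens : ∀ i (x x' : Fin n → XT),
      Set.ncard {j | x j ≠ x' j} ≤ 1 → |T i x - T i x'| ≤ Δ)
    (x x' : Fin n → XT) (hham : Set.ncard {j | x j ≠ x' j} ≤ 1)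
    (S : Set Bool) :
    (Measure.pi fun _ : Fin (B + 1) => stdLaplace)
        {ζ | dpResamplingOutput T α Δ (ε + Real.log (1 / (1 - δ))) x ζ ∈ S}
      ≤ ENNReal.ofReal (Real.exp ε) *
          (Measure.pi fun _ : Fin (B + 1) => stdLaplace)
            {ζ | dpResamplingOutput T α Δ (ε + Real.log (1 / (1 - δ))) x' ζ ∈ S}
        + ENNReal.ofReal δ := by
  classical
  set μ := Measure.pi fun _ : Fin (B + 1) => stdLaplace with hμ
  set ξ := ε + Real.log (1 / (1 - δ)) with hξdef
  have h1δ : (0:ℝ) < 1 - δ := by linarith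
  have hξ : 0 < ξ := by
    have hlog : 0 ≤ Real.log (1 / (1 - δ)) := by
      apply Real.log_nonneg
      rw [le_div_iff₀ h1δ, one_mul]
      linarith
    have : 0 < ε + Real.log (1 / (1 - δ)) := by linarith
    rw [hξdef]; exact this
  have hcξ : 2 * Δ / ξ * ξ = 2 * Δ := div_mul_cancel₀ _ hξ.ne'
  have hB1 : (0:ℝ) < (B:ℝ) + 1 := by positivity
  -- outcome characterization
  have hout : ∀ (y : Fin n → XT) (ζ : Fin (B + 1) → ℝ),
      dpResamplingOutput T α Δ ξ y ζ = true ↔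
      ((∑ i : Fin B, if T 0 y + 2 * Δ / ξ * ζ 0 ≤ T i.succ y + 2 * Δ / ξ * ζ i.succ
          then (1:ℝ) else 0) + 1) / ((B:ℝ) + 1) ≤ α := by
    intro y ζ
    unfold dpResamplingOutput
    split_ifs with h
    · exact iff_of_true rfl h
    · simp only [Bool.false_eq_true, false_iff]
      exact h
  -- measurability of the acceptance event
  have hEmeas : ∀ y : Fin n → XT,
      MeasurableSet {ζ : Fin (B + 1) → ℝ | dpResamplingOutput T α Δ ξ y ζ = true} := by
    intro y
    have hset : {ζ : Fin (B + 1) → ℝ | dpResamplingOutput T α Δ ξ y ζ = true}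
        = {ζ : Fin (B + 1) → ℝ |
            ((∑ i : Fin B, if T 0 y + 2 * Δ / ξ * ζ 0 ≤ T i.succ y + 2 * Δ / ξ * ζ i.succ
              then (1:ℝ) else 0) + 1) / ((B:ℝ) + 1) ≤ α} := by
      ext ζ; exact hout y ζ
    rw [hset]
    apply measurableSet_le _ measurable_const
    apply Measurable.div_const
    apply Measurable.add_const
    apply Finset.measurable_sum
    intro i _
    refine Measurable.ite ?_ measurable_const measurable_const
    exact measurableSet_le
      (((measurable_pi_apply 0).const_mul _).const_add _)
      (((measurable_pi_apply i.succ).const_mul _).const_add _)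
  -- monotone coupling inclusions
  have hmono_true : ∀ ζ : Fin (B + 1) → ℝ, dpResamplingOutput T α Δ ξ x ζ = true →
      dpResamplingOutput T α Δ ξ x' (Function.update ζ 0 (ζ 0 + ξ)) = true := by
    intro ζ h
    rw [hout] at h ⊢
    refine le_trans ?_ h
    rw [div_le_div_iff_of_pos_right hB1]
    apply add_le_add_left
    apply Finset.sum_le_sum
    intro i _
    rw [Function.update_self, Function.update_of_ne (Fin.succ_ne_zero i)]
    have hc0 := abs_le.mp (hsens 0 x x' hham)
    have hci := abs_le.mp (hsens i.succ x x' hham)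
    have hcexp : 2 * Δ / ξ * (ζ 0 + ξ) = 2 * Δ / ξ * ζ 0 + 2 * Δ := by
      rw [mul_add, hcξ]
    split_ifs with h1 h2
    · exact le_refl _
    · exfalso; exact h2 (by linarith)
    · norm_num
    · exact le_refl _
  have hmono_false : ∀ ζ : Fin (B + 1) → ℝ, dpResamplingOutput T α Δ ξ x ζ = false →
      dpResamplingOutput T α Δ ξ x' (Function.update ζ 0 (ζ 0 + (-ξ))) = false := by
    intro ζ h
    rw [← Bool.not_eq_true] at h ⊢
    rw [hout] at h ⊢
    intro hcon
    apply h
    refine le_trans ?_ hcon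
    rw [div_le_div_iff_of_pos_right hB1]
    apply add_le_add_left
    apply Finset.sum_le_sum
    intro i _
    rw [Function.update_self, Function.update_of_ne (Fin.succ_ne_zero i)]
    have hc0 := abs_le.mp (hsens 0 x x' hham)
    have hci := abs_le.mp (hsens i.succ x x' hham)
    have hcexp : 2 * Δ / ξ * (ζ 0 + -ξ) = 2 * Δ / ξ * ζ 0 - 2 * Δ := by
      rw [mul_add, mul_neg, hcξ]; ring
    split_ifs with h1 h2
    · exact le_refl _
    · exfalso; exact h2 (by linarith)
    · norm_num
    · exact le_refl _
  have hprob : ∀ A : Set (Fin (B + 1) → ℝ), μ A ≤ 1 := fun A => prob_le_one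
  by_cases htS : true ∈ S <;> by_cases hfS : false ∈ S
  · -- S = {true, false}
    have huniv : ∀ y : Fin n → XT,
        {ζ : Fin (B + 1) → ℝ | dpResamplingOutput T α Δ ξ y ζ ∈ S} = Set.univ := by
      intro y; ext ζ
      simp only [Set.mem_setOf_eq, Set.mem_univ, iff_true]
      cases h : dpResamplingOutput T α Δ ξ y ζ
      · exact hfS
      · exact htS
    rw [huniv x, huniv x', measure_univ]
    calc (1 : ENNReal) = 1 * 1 := (one_mul 1).symm
      _ ≤ ENNReal.ofReal (Real.exp ε) * 1 := by
          exact mul_le_mul_left (ENNReal.one_le_ofReal.mpr (Real.one_le_exp hε.le)) 1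
      _ ≤ ENNReal.ofReal (Real.exp ε) * 1 + ENNReal.ofReal δ := le_self_add
  · -- S = {true}
    have hsetS : ∀ y : Fin n → XT,
        {ζ : Fin (B + 1) → ℝ | dpResamplingOutput T α Δ ξ y ζ ∈ S}
          = {ζ : Fin (B + 1) → ℝ | dpResamplingOutput T α Δ ξ y ζ = true} := by
      intro y; ext ζ
      cases h : dpResamplingOutput T α Δ ξ y ζ <;> simp [h, htS, hfS]
    rw [hsetS x, hsetS x']
    refine DPAux.dp_arith hε hδ0 hδ1 (hprob _) (hprob _) ?_
    have hsub : {ζ : Fin (B + 1) → ℝ | dpResamplingOutput T α Δ ξ x ζ = true}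
        ⊆ {ζ : Fin (B + 1) → ℝ | Function.update ζ 0 (ζ 0 + ξ) ∈
            {ζ' | dpResamplingOutput T α Δ ξ x' ζ' = true}} :=
      fun ζ h => hmono_true ζ h
    calc μ {ζ : Fin (B + 1) → ℝ | dpResamplingOutput T α Δ ξ x ζ = true}
        ≤ μ {ζ : Fin (B + 1) → ℝ | Function.update ζ 0 (ζ 0 + ξ) ∈
            {ζ' | dpResamplingOutput T α Δ ξ x' ζ' = true}} := measure_mono hsub
      _ ≤ ENNReal.ofReal (Real.exp ξ) *
            μ {ζ' | dpResamplingOutput T α Δ ξ x' ζ' = true} := by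
          simpa [abs_of_pos hξ] using DPAux.pi_shift ξ (hEmeas x')
  · -- S = {false}
    have hsetS : ∀ y : Fin n → XT,
        {ζ : Fin (B + 1) → ℝ | dpResamplingOutput T α Δ ξ y ζ ∈ S}
          = {ζ : Fin (B + 1) → ℝ | dpResamplingOutput T α Δ ξ y ζ = false} := by
      intro y; ext ζ
      cases h : dpResamplingOutput T α Δ ξ y ζ <;> simp [h, htS, hfS]
    rw [hsetS x, hsetS x']
    have hFmeas : ∀ y : Fin n → XT,
        MeasurableSet {ζ : Fin (B + 1) → ℝ | dpResamplingOutput T α Δ ξ y ζ = false} := by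
      intro y
      have : {ζ : Fin (B + 1) → ℝ | dpResamplingOutput T α Δ ξ y ζ = false}
          = {ζ : Fin (B + 1) → ℝ | dpResamplingOutput T α Δ ξ y ζ = true}ᶜ := by
        ext ζ; cases h : dpResamplingOutput T α Δ ξ y ζ <;> simp [h]
      rw [this]; exact (hEmeas y).compl
    refine DPAux.dp_arith hε hδ0 hδ1 (hprob _) (hprob _) ?_
    have hsub : {ζ : Fin (B + 1) → ℝ | dpResamplingOutput T α Δ ξ x ζ = false}
        ⊆ {ζ : Fin (B + 1) → ℝ | Function.update ζ 0 (ζ 0 + (-ξ)) ∈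
            {ζ' | dpResamplingOutput T α Δ ξ x' ζ' = false}} :=
      fun ζ h => hmono_false ζ h
    calc μ {ζ : Fin (B + 1) → ℝ | dpResamplingOutput T α Δ ξ x ζ = false}
        ≤ μ {ζ : Fin (B + 1) → ℝ | Function.update ζ 0 (ζ 0 + (-ξ)) ∈
            {ζ' | dpResamplingOutput T α Δ ξ x' ζ' = false}} := measure_mono hsub
      _ ≤ ENNReal.ofReal (Real.exp ξ) *
            μ {ζ' | dpResamplingOutput T α Δ ξ x' ζ' = false} := by
          simpa [abs_neg, abs_of_pos hξ] using DPAux.pi_shift (-ξ) (hFmeas x')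
  · -- S = ∅
    have hempty : ∀ y : Fin n → XT,
        {ζ : Fin (B + 1) → ℝ | dpResamplingOutput T α Δ ξ y ζ ∈ S} = ∅ := by
      intro y; ext ζ
      simp only [Set.mem_setOf_eq, Set.mem_empty_iff_false, iff_false]
      cases h : dpResamplingOutput T α Δ ξ y ζ
      · exact hfS
      · exact htS
    rw [hempty x, hempty x']
    simp

end
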